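/- Let N ≥ 1, σ > 0, V_min < V_max, let A be a finite set with at least two elements, and let Q : ℝ^N × A → ℝ be measurable in its first argument with V_min ≤ Q(x, a) ≤ V_max for all x, a. Define Q̃(s, a) := E_{Δ ~ N(0, σ²I_N)}[Q(s + Δ, a)] and fix a state s ∈ ℝ^N; assume V_min < Q̃(s′, a) < V_max for all s′ ∈ ℝ^N and a ∈ A. Let a₁ ∈ A satisfy Q̃(s, a₁) ≥ Q̃(s, a) for all a ∈ A, and let a₂ ∈ A \ {a₁} satisfy Q̃(s, a₂) ≥ Q̃(s, a) for all a ∈ A \ {a₁}. Set r := (σ/2)·(Φ⁻¹((Q̃(s, a₁) − V_min)/(V_max − V_min)) − Φ⁻¹((Q̃(s, a₂) − V_min)/(V_max − V_min))). Then for every perturbation δ ∈ ℝ^N with ‖δ‖₂ < r and every a ∈ A with a ≠ a₁, it holds that Q̃(s + δ, a₁) > Q̃(s + δ, a); in particular, the action with the highest smoothed value at s + δ is still a₁. -/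

import Mathlib

open MeasureTheory ProbabilityTheory

/-- The centered Gaussian product measure `N(0, σ² I)` on Euclidean space. -/
noncomputable def gaussPi (ι : Type*) [Fintype ι] (σ : ℝ) :
    Measure (EuclideanSpace ℝ ι) :=
  (Measure.pi fun _ : ι => gaussianReal 0 ⟨σ ^ 2, sq_nonneg σ⟩).map
    (MeasurableEquiv.toLp 2 (ι → ℝ))

/-- The cumulative distribution function `Φ` of the standard one-dimensional Gaussian. -/
noncomputable def stdGaussianCDF (x : ℝ) : ℝ :=
  (gaussianReal 0 1 (Set.Iic x)).toReal

/-- The inverse `Φ⁻¹` of the standard Gaussian CDF (on `(0,1)`). -/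
noncomputable def probit : ℝ → ℝ :=
  Function.invFun stdGaussianCDF


open Real Set Filter
open scoped ENNReal NNReal RealInnerProductSpace Topology

lemma myLintegralPiProd {n : ℕ} (μ : Measure ℝ) [SigmaFinite μ]
    (g : Fin n → ℝ → ℝ≥0∞) (hg : ∀ i, Measurable (g i)) :
    ∫⁻ x : Fin n → ℝ, ∏ i, g i (x i) ∂(Measure.pi fun _ => μ) = ∏ i, ∫⁻ t, g i t ∂μ := by
  induction n with
  | zero => simp [Measure.pi_univ]
  | succ n ih =>
      have hmp := (measurePreserving_piFinSuccAbove (fun _ : Fin (n+1) => μ) 0)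
      have hF : Measurable fun z : ℝ × (Fin n → ℝ) =>
          g 0 z.1 * ∏ i : Fin n, g i.succ (z.2 i) :=
        ((hg 0).comp measurable_fst).mul
          (Finset.measurable_prod _ fun i _ =>
            (hg i.succ).comp ((measurable_pi_apply i).comp measurable_snd))
      have h1 := (hmp.lintegral_comp hF).symm
      have h2 : ∀ x : Fin (n+1) → ℝ,
          (g 0 (((MeasurableEquiv.piFinSuccAbove (fun _ => ℝ) 0) x : ℝ × (Fin n → ℝ)).1) *
            ∏ i : Fin n, g i.succ (((MeasurableEquiv.piFinSuccAbove (fun _ => ℝ) 0) x :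
              ℝ × (Fin n → ℝ)).2 i)) = ∏ i, g i (x i) := by
        intro x
        rw [show ((MeasurableEquiv.piFinSuccAbove (fun _ => ℝ) 0) x : ℝ × (Fin n → ℝ))
          = (x 0, fun i => x (Fin.succAbove 0 i)) from rfl]
        rw [Fin.prod_univ_succ (fun i => g i (x i))]
        simp only []
        congr 1
      calc ∫⁻ x : Fin (n+1) → ℝ, ∏ i, g i (x i) ∂(Measure.pi fun _ => μ)
          = ∫⁻ z : ℝ × (Fin n → ℝ), g 0 z.1 * ∏ i : Fin n, g i.succ (z.2 i)
              ∂(μ.prod (Measure.pi fun _ => μ)) := by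
            rw [h1]; exact lintegral_congr fun x => (h2 x).symm
        _ = (∫⁻ t, g 0 t ∂μ) * ∏ i : Fin n, ∫⁻ t, g i.succ t ∂μ := by
            have hmul := MeasureTheory.lintegral_prod_mul (μ := μ)
              (ν := Measure.pi fun _ : Fin n => μ) (f := g 0)
              (g := fun y : Fin n → ℝ => ∏ i, g i.succ (y i)) (hg 0).aemeasurable
              (Finset.measurable_prod _ fun i _ =>
                (hg i.succ).comp (measurable_pi_apply i)).aemeasurable
            rw [hmul, ih (fun i => g i.succ) (fun i => hg i.succ)]
        _ = ∏ i, ∫⁻ t, g i t ∂μ := (Fin.prod_univ_succ fun i => ∫⁻ t, g i t ∂μ).symm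

lemma myMapWithDensity {α β : Type*} [MeasurableSpace α] [MeasurableSpace β]
    (e : α ≃ᵐ β) (μ : Measure α) (f : α → ℝ≥0∞) (hf : Measurable f) :
    (μ.withDensity f).map e = (μ.map e).withDensity (f ∘ e.symm) := by
  ext s hs
  rw [Measure.map_apply e.measurable hs, withDensity_apply _ (e.measurable hs),
    withDensity_apply _ hs, setLIntegral_map hs ((hf.comp e.symm.measurable)) e.measurable]
  simp

noncomputable def myW (N : ℕ) (σ : ℝ) (x : EuclideanSpace ℝ (Fin N)) : ℝ :=
  ((Real.sqrt (2 * π * σ^2))⁻¹) ^ N * Real.exp (-‖x‖^2 / (2*σ^2))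

variable {N : ℕ} {σ : ℝ}

lemma myV_ne (hσ : 0 < σ) : (⟨σ^2, sq_nonneg σ⟩ : ℝ≥0) ≠ 0 := by
  have h : σ^2 ≠ 0 := pow_ne_zero 2 hσ.ne'
  exact fun h' => h (congrArg NNReal.toReal h')

lemma myW_pos (hσ : 0 < σ) (x : EuclideanSpace ℝ (Fin N)) : 0 < myW N σ x := by
  unfold myW
  have : 0 < Real.sqrt (2 * π * σ^2) := Real.sqrt_pos.2 (by positivity)
  positivity

lemma myW_cont : Continuous (myW N σ) := by
  unfold myW
  exact continuous_const.mul
    (Real.continuous_exp.comp (((continuous_norm.pow 2).neg).div_const _))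

lemma norm_sq_eq_sum (x : EuclideanSpace ℝ (Fin N)) : ‖x‖^2 = ∑ i, (x i)^2 := by
  rw [EuclideanSpace.norm_eq, Real.sq_sqrt (by positivity)]
  exact Finset.sum_congr rfl fun i _ => by rw [Real.norm_eq_abs, sq_abs]

lemma prod_pdfReal (x : EuclideanSpace ℝ (Fin N)) :
    ∏ i, gaussianPDFReal 0 (⟨σ^2, sq_nonneg σ⟩ : ℝ≥0) (x i) = myW N σ x := by
  unfold gaussianPDFReal myW
  rw [Finset.prod_mul_distrib, Finset.prod_const, ← Real.exp_sum, Finset.card_univ,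
    Fintype.card_fin, norm_sq_eq_sum]
  congr 1
  simp only [NNReal.coe_mk, sub_zero]
  rw [← Finset.sum_div, Finset.sum_neg_distrib]
  rfl

lemma gaussPi_eq (hσ : 0 < σ) :
    gaussPi (Fin N) σ = (volume : Measure (EuclideanSpace ℝ (Fin N))).withDensity
      (fun x => ENNReal.ofReal (myW N σ x)) := by
  have hv := myV_ne hσ
  have hmeas : Measurable fun x : Fin N → ℝ =>
      ∏ i, gaussianPDF 0 (⟨σ^2, sq_nonneg σ⟩ : ℝ≥0) (x i) :=
    Finset.measurable_prod _ fun i _ =>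
      (measurable_gaussianPDF _ _).comp (measurable_pi_apply i)
  haveI : ∀ i : Fin N, IsProbabilityMeasure (gaussianReal 0 (⟨σ^2, sq_nonneg σ⟩ : ℝ≥0)) :=
    fun _ => instIsProbabilityMeasureGaussianReal _ _
  have hA : (Measure.pi fun _ : Fin N => gaussianReal 0 (⟨σ^2, sq_nonneg σ⟩ : ℝ≥0)) =
      (Measure.pi fun _ : Fin N => (volume : Measure ℝ)).withDensity
        (fun x => ∏ i, gaussianPDF 0 (⟨σ^2, sq_nonneg σ⟩ : ℝ≥0) (x i)) := by
    refine Measure.pi_eq fun s hs => ?_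
    rw [withDensity_apply _ (MeasurableSet.univ_pi hs), ← lintegral_indicator (MeasurableSet.univ_pi hs)]
    have hind : ∀ x : Fin N → ℝ,
        (Set.univ.pi s).indicator (fun x => ∏ i, gaussianPDF 0 (⟨σ^2, sq_nonneg σ⟩ : ℝ≥0) (x i)) x
          = ∏ i, (s i).indicator (gaussianPDF 0 (⟨σ^2, sq_nonneg σ⟩ : ℝ≥0)) (x i) := by
      intro x
      by_cases hx : x ∈ Set.univ.pi s
      · rw [Set.indicator_of_mem hx]
        exact Finset.prod_congr rfl fun i _ =>
          (Set.indicator_of_mem (hx i (Set.mem_univ i)) _).symm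
      · rw [Set.indicator_of_notMem hx]
        rw [Set.mem_univ_pi] at hx
        push_neg at hx
        obtain ⟨i, hi⟩ := hx
        exact (Finset.prod_eq_zero (Finset.mem_univ i)
          (by rw [Set.indicator_of_notMem hi])).symm
    rw [lintegral_congr hind,
      myLintegralPiProd volume (fun i => (s i).indicator (gaussianPDF 0 (⟨σ^2, sq_nonneg σ⟩ : ℝ≥0)))
        (fun i => (measurable_gaussianPDF _ _).indicator (hs i))]
    exact Finset.prod_congr rfl fun i _ => by
      rw [lintegral_indicator (hs i), gaussianReal_apply 0 hv (s i)]
  rw [gaussPi, hA, myMapWithDensity ((MeasurableEquiv.toLp 2 (Fin N → ℝ))) _ _ hmeas]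
  have hvol : (Measure.pi fun _ : Fin N => (volume : Measure ℝ)).map
      (MeasurableEquiv.toLp 2 (Fin N → ℝ)) = volume := by
    rw [← volume_pi]
    exact (MeasurePreserving.symm (e := (MeasurableEquiv.toLp 2 (Fin N → ℝ)).symm)
      (EuclideanSpace.volume_preserving_symm_measurableEquiv_toLp (Fin N))).map_eq
  rw [hvol]
  congr 1
  funext x
  show (∏ i, gaussianPDF 0 (⟨σ^2, sq_nonneg σ⟩ : ℝ≥0) (x i)) = _
  have : ∀ i, ((MeasurableEquiv.toLp 2 (Fin N → ℝ)).symm x : Fin N → ℝ) i = x i :=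
    fun i => rfl
  have h := ENNReal.ofReal_prod_of_nonneg (s := Finset.univ)
    (f := fun i => gaussianPDFReal 0 (⟨σ^2, sq_nonneg σ⟩ : ℝ≥0) (x i))
    (fun i _ => gaussianPDFReal_nonneg _ _ _)
  rw [prod_pdfReal] at h
  exact h.symm

lemma gaussSingleton (x : ℝ) : gaussianReal 0 1 {x} = 0 :=
  gaussianReal_absolutelyContinuous 0 one_ne_zero (Real.volume_singleton)

lemma Phi_mono : Monotone stdGaussianCDF := fun a b hab =>
  ENNReal.toReal_mono (measure_ne_top _ _) (measure_mono (Set.Iic_subset_Iic.2 hab))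

lemma Phi_add_Ioc {a b : ℝ} (hab : a ≤ b) :
    stdGaussianCDF b = stdGaussianCDF a + (gaussianReal 0 1 (Set.Ioc a b)).toReal := by
  unfold stdGaussianCDF
  rw [← Set.Iic_union_Ioc_eq_Iic hab,
    measure_union (Set.Iic_disjoint_Ioc le_rfl) measurableSet_Ioc,
    ENNReal.toReal_add (measure_ne_top _ _) (measure_ne_top _ _)]

lemma Ioc_gauss_pos {a b : ℝ} (h : a < b) : 0 < (gaussianReal 0 1 (Set.Ioc a b)).toReal := by
  have h1 : 0 < gaussianReal 0 1 (Set.Ioc a b) := by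
    rw [gaussianReal_apply 0 one_ne_zero]
    refine (lintegral_pos_iff_support (measurable_gaussianPDF 0 1)).2 ?_
    have hsupp : Function.support (gaussianPDF 0 1) = Set.univ :=
      Set.eq_univ_of_forall fun t => (gaussianPDF_pos 0 one_ne_zero t).ne'
    rw [hsupp, Measure.restrict_apply_univ, Real.volume_Ioc]
    exact ENNReal.ofReal_pos.2 (by linarith)
  exact ENNReal.toReal_pos h1.ne' (measure_ne_top _ _)

lemma Phi_strictMono : StrictMono stdGaussianCDF := fun a b h => by
  have h2 := Phi_add_Ioc h.le
  have h3 := Ioc_gauss_pos h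
  linarith

lemma Phi_lip {a b : ℝ} (hab : a ≤ b) :
    stdGaussianCDF b - stdGaussianCDF a ≤ (Real.sqrt (2*π))⁻¹ * (b - a) := by
  have h1 : gaussianReal 0 1 (Set.Ioc a b)
      ≤ ENNReal.ofReal ((Real.sqrt (2*π))⁻¹) * ENNReal.ofReal (b - a) := by
    rw [gaussianReal_apply 0 one_ne_zero]
    calc ∫⁻ t in Set.Ioc a b, gaussianPDF 0 1 t
        ≤ ∫⁻ _ in Set.Ioc a b, ENNReal.ofReal ((Real.sqrt (2*π))⁻¹) := by
          refine lintegral_mono fun t => ?_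
          rw [gaussianPDF_def]
          refine ENNReal.ofReal_le_ofReal ?_
          unfold gaussianPDFReal
          have h2 : Real.exp (-(t-0)^2/(2*((1:ℝ≥0):ℝ))) ≤ 1 :=
            Real.exp_le_one_iff.2 (by
              push_cast
              nlinarith [sq_nonneg (t - 0)])
          have h3 : (0:ℝ) ≤ (Real.sqrt (2*π*((1:ℝ≥0):ℝ)))⁻¹ := by positivity
          calc (Real.sqrt (2*π*((1:ℝ≥0):ℝ)))⁻¹ * Real.exp (-(t-0)^2/(2*((1:ℝ≥0):ℝ)))
              ≤ (Real.sqrt (2*π*((1:ℝ≥0):ℝ)))⁻¹ * 1 := by nlinarith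
            _ = (Real.sqrt (2*π))⁻¹ := by push_cast; rw [mul_one, mul_one]
      _ = ENNReal.ofReal ((Real.sqrt (2*π))⁻¹) * volume (Set.Ioc a b) :=
          setLIntegral_const _ _
      _ = ENNReal.ofReal ((Real.sqrt (2*π))⁻¹) * ENNReal.ofReal (b - a) := by
          rw [Real.volume_Ioc]
  have h4 := ENNReal.toReal_mono (by finiteness) h1
  rw [ENNReal.toReal_mul, ENNReal.toReal_ofReal (by positivity),
    ENNReal.toReal_ofReal (by linarith)] at h4
  have h5 := Phi_add_Ioc hab
  linarith

lemma Phi_cont : Continuous stdGaussianCDF := by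
  have hlip : LipschitzWith (Real.toNNReal ((Real.sqrt (2*π))⁻¹)) stdGaussianCDF := by
    refine LipschitzWith.of_dist_le_mul fun a b => ?_
    have hco : ((Real.toNNReal ((Real.sqrt (2*π))⁻¹)) : ℝ) = (Real.sqrt (2*π))⁻¹ :=
      Real.coe_toNNReal _ (by positivity)
    rcases le_total a b with h | h
    · rw [Real.dist_eq, Real.dist_eq, abs_of_nonpos (by linarith [Phi_mono h]),
        abs_of_nonpos (by linarith), hco]
      have := Phi_lip h
      linarith
    · rw [Real.dist_eq, Real.dist_eq, abs_of_nonneg (by linarith [Phi_mono h]),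
        abs_of_nonneg (by linarith), hco]
      have := Phi_lip h
      linarith
  exact hlip.continuous

lemma Phi_tendsto_one : Tendsto stdGaussianCDF atTop (𝓝 1) := by
  have h := tendsto_measure_Iic_atTop (gaussianReal 0 1)
  rw [measure_univ] at h
  have h2 := (ENNReal.tendsto_toReal (by simp : (1:ℝ≥0∞) ≠ ⊤)).comp h
  simp at h2
  exact h2

lemma Phi_neg (x : ℝ) : stdGaussianCDF (-x) = 1 - stdGaussianCDF x := by
  have hone : (⟨(-1:ℝ)^2, sq_nonneg _⟩ : ℝ≥0) * 1 = 1 := by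
    have : (⟨(-1:ℝ)^2, sq_nonneg _⟩ : ℝ≥0) = 1 := by ext; norm_num
    rw [this, mul_one]
  have hmap : (gaussianReal 0 1).map (fun t => (-1 : ℝ) * t) = gaussianReal 0 1 := by
    rw [gaussianReal_map_const_mul (-1 : ℝ), mul_zero]
    congr 1
  have hIic : gaussianReal 0 1 (Set.Iic (-x)) = gaussianReal 0 1 (Set.Ici x) := by
    conv_lhs => rw [← hmap]
    rw [Measure.map_apply (measurable_const_mul _) measurableSet_Iic]
    congr 1
    ext t
    simp only [Set.mem_preimage, Set.mem_Iic, Set.mem_Ici]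
    constructor <;> intro <;> linarith
  have hIci : gaussianReal 0 1 (Set.Ici x) = gaussianReal 0 1 (Set.Ioi x) :=
    (measure_congr (MeasureTheory.Ioi_ae_eq_Ici' (gaussSingleton x))).symm
  have hsplit : stdGaussianCDF x + (gaussianReal 0 1 (Set.Ioi x)).toReal = 1 := by
    unfold stdGaussianCDF
    rw [← ENNReal.toReal_add (measure_ne_top _ _) (measure_ne_top _ _),
      ← measure_union (Set.Iic_disjoint_Ioi le_rfl) measurableSet_Ioi,
      Set.Iic_union_Ioi, measure_univ]
    simp
  unfold stdGaussianCDF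
  rw [hIic, hIci]
  unfold stdGaussianCDF at hsplit
  linarith

lemma exists_Phi_eq {p : ℝ} (h0 : 0 < p) (h1 : p < 1) : ∃ x, stdGaussianCDF x = p := by
  obtain ⟨b, hb⟩ := (Filter.Tendsto.eventually_const_le (by linarith : p < 1) Phi_tendsto_one).exists
  obtain ⟨a, ha⟩ :=
    (Filter.Tendsto.eventually_const_le (by linarith : 1 - p/2 < 1) Phi_tendsto_one).exists
  have hlow : stdGaussianCDF (-a) ≤ p/2 := by rw [Phi_neg]; linarith
  have hbc : p ≤ stdGaussianCDF (max b (-a)) := le_trans hb (Phi_mono (le_max_left _ _))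
  have h2 : -a ≤ max b (-a) := le_max_right _ _
  have hp : p ∈ Set.Icc (stdGaussianCDF (-a)) (stdGaussianCDF (max b (-a))) :=
    ⟨by linarith, hbc⟩
  obtain ⟨x, _, hx⟩ := intermediate_value_Icc h2 Phi_cont.continuousOn hp
  exact ⟨x, hx⟩

lemma Phi_probit {p : ℝ} (h0 : 0 < p) (h1 : p < 1) : stdGaussianCDF (probit p) = p :=
  Function.invFun_eq (exists_Phi_eq h0 h1)

lemma probit_Phi (x : ℝ) : probit (stdGaussianCDF x) = x :=
  Function.leftInverse_invFun Phi_strictMono.injective x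

lemma probit_mono {p q : ℝ} (h0 : 0 < p) (h1 : q < 1) (hpq : p ≤ q) :
    probit p ≤ probit q := by
  by_contra hlt
  push_neg at hlt
  have h2 := Phi_strictMono hlt
  rw [Phi_probit (lt_of_lt_of_le h0 hpq) h1, Phi_probit h0 (lt_of_le_of_lt hpq h1)] at h2
  linarith

lemma probit_strictMono {p q : ℝ} (h0 : 0 < p) (h1 : q < 1) (hpq : p < q) :
    probit p < probit q := by
  rcases lt_trichotomy (probit p) (probit q) with h | h | h
  · exact h
  · exfalso
    have := Phi_probit h0 (by linarith : p < 1)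
    rw [h, Phi_probit (by linarith : 0 < q) h1] at this
    linarith
  · exfalso
    have h2 := Phi_strictMono h
    rw [Phi_probit (by linarith : 0 < q) h1, Phi_probit h0 (by linarith : p < 1)] at h2
    linarith

lemma probit_one_sub {p : ℝ} (h0 : 0 < p) (h1 : p < 1) : probit (1 - p) = - probit p := by
  have h := Phi_neg (probit p)
  rw [Phi_probit h0 h1] at h
  rw [← h, probit_Phi]

lemma gaussPi_isProb : IsProbabilityMeasure (gaussPi (Fin N) σ) := by
  unfold gaussPi
  haveI : ∀ i : Fin N, IsProbabilityMeasure (gaussianReal 0 (⟨σ^2, sq_nonneg σ⟩ : ℝ≥0)) :=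
    fun _ => instIsProbabilityMeasureGaussianReal _ _
  haveI : IsProbabilityMeasure
      (Measure.pi fun _ : Fin N => gaussianReal 0 (⟨σ^2, sq_nonneg σ⟩ : ℝ≥0)) := inferInstance
  exact Measure.isProbabilityMeasure_map (MeasurableEquiv.measurable _).aemeasurable


/-- Likelihood ratio of the shifted Gaussian. -/
noncomputable def myL (N : ℕ) (σ : ℝ) (δ x : EuclideanSpace ℝ (Fin N)) : ℝ :=
  Real.exp ((2 * ⟪δ, x⟫ - ‖δ‖^2)/(2*σ^2))

lemma myL_pos (δ x : EuclideanSpace ℝ (Fin N)) : 0 < myL N σ δ x := Real.exp_pos _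

lemma myW_shift (hσ : 0 < σ) (δ y : EuclideanSpace ℝ (Fin N)) :
    myW N σ (y - δ) = myW N σ y * myL N σ δ y := by
  have h : -‖y - δ‖^2/(2*σ^2) = -‖y‖^2/(2*σ^2) + (2 * ⟪δ, y⟫ - ‖δ‖^2)/(2*σ^2) := by
    rw [norm_sub_sq_real, real_inner_comm y δ]
    field_simp
    ring
  unfold myW myL
  rw [h, Real.exp_add]
  ring

lemma lintegral_shift (hσ : 0 < σ) (g : EuclideanSpace ℝ (Fin N) → ℝ≥0∞)
    (δ : EuclideanSpace ℝ (Fin N)) :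
    ∫⁻ x, g (δ + x) ∂(gaussPi (Fin N) σ)
      = ∫⁻ x, g x * ENNReal.ofReal (myL N σ δ x) ∂(gaussPi (Fin N) σ) := by
  have hWmeas : Measurable fun x : EuclideanSpace ℝ (Fin N) => ENNReal.ofReal (myW N σ x) :=
    ENNReal.measurable_ofReal.comp myW_cont.measurable
  have hfin : ∀ᵐ x : EuclideanSpace ℝ (Fin N) ∂(volume),
      ENNReal.ofReal (myW N σ x) < ⊤ := ae_of_all _ fun x => ENNReal.ofReal_lt_top
  rw [gaussPi_eq hσ,
    lintegral_withDensity_eq_lintegral_mul_non_measurable _ hWmeas hfin,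
    lintegral_withDensity_eq_lintegral_mul_non_measurable _ hWmeas hfin]
  simp only [Pi.mul_apply]
  have hrw : ∀ x : EuclideanSpace ℝ (Fin N),
      ENNReal.ofReal (myW N σ x) * g (δ + x)
        = (fun y => ENNReal.ofReal (myW N σ (y - δ)) * g y) (δ + x) := by
    intro x; simp [add_sub_cancel_left]
  rw [lintegral_congr hrw,
    lintegral_add_left_eq_self (fun y => ENNReal.ofReal (myW N σ (y - δ)) * g y) δ]
  refine lintegral_congr fun y => ?_
  rw [myW_shift hσ, ENNReal.ofReal_mul (myW_pos hσ y).le]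
  ring

/-- Neyman–Pearson style inequality. -/
lemma myNP {α : Type*} [MeasurableSpace α] (μ : Measure α) [IsFiniteMeasure μ]
    (F L : α → ℝ≥0∞) (hFm : Measurable F) (hLm : Measurable L) (hF1 : ∀ x, F x ≤ 1)
    (S : Set α) (hS : MeasurableSet S) (k : ℝ≥0∞) (hk : k ≠ ⊤)
    (hSL : ∀ x ∈ S, L x ≤ k) (hSL' : ∀ x ∉ S, k ≤ L x)
    (hm : ∫⁻ x, F x ∂μ = μ S) :
    ∫⁻ x in S, L x ∂μ ≤ ∫⁻ x, F x * L x ∂μ := by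
  have key : ∀ x, S.indicator L x + k * F x
      ≤ F x * L x + S.indicator (fun _ => k) x := by
    intro x
    by_cases hx : x ∈ S
    · rw [Set.indicator_of_mem hx, Set.indicator_of_mem hx]
      calc L x + k * F x = L x * ((1 - F x) + F x) + k * F x := by
            rw [tsub_add_cancel_of_le (hF1 x), mul_one]
        _ = L x * (1 - F x) + (L x * F x + k * F x) := by ring
        _ ≤ k * (1 - F x) + (L x * F x + k * F x) :=
            add_le_add_left (mul_le_mul_left (hSL x hx) _) _
        _ = F x * L x + (k * (1 - F x) + k * F x) := by ring
        _ = F x * L x + k * ((1 - F x) + F x) := by rw [mul_add]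
        _ = F x * L x + k := by rw [tsub_add_cancel_of_le (hF1 x), mul_one]
    · rw [Set.indicator_of_notMem hx, Set.indicator_of_notMem hx, zero_add, add_zero]
      calc k * F x ≤ L x * F x := mul_le_mul_left (hSL' x hx) _
        _ = F x * L x := mul_comm _ _
  have hint : ∫⁻ x, (S.indicator L x + k * F x) ∂μ
      ≤ ∫⁻ x, (F x * L x + S.indicator (fun _ => k) x) ∂μ := lintegral_mono key
  rw [lintegral_add_left (hLm.indicator hS), lintegral_add_left (by exact hFm.mul hLm : Measurable fun x => F x * L x),
    lintegral_indicator hS, lintegral_const_mul k hFm, hm,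
    lintegral_indicator_const hS] at hint
  exact (ENNReal.add_le_add_iff_right
    (ENNReal.mul_ne_top hk (measure_ne_top _ _))).1 hint

lemma gauss_halfspace (hN : 1 ≤ N) (hσ : 0 < σ) (u : EuclideanSpace ℝ (Fin N))
    (hu : u ≠ 0) (c : ℝ) :
    gaussPi (Fin N) σ {x | ⟪u, x⟫ ≤ c}
      = gaussianReal 0 1 (Set.Iic (c / (σ * ‖u‖))) := by
  haveI : NeZero N := ⟨by omega⟩
  have hpos : 0 < ‖u‖ := norm_pos_iff.2 hu
  have hcard : Module.finrank ℝ (EuclideanSpace ℝ (Fin N)) = Fintype.card (Fin N) := by simp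
  have hon : Orthonormal ℝ
      (Set.restrict {(0 : Fin N)} (fun _ => (‖u‖⁻¹ • u : EuclideanSpace ℝ (Fin N)))) := by
    constructor
    · intro i
      rw [show ({(0 : Fin N)} : Set (Fin N)).restrict
          (fun _ => (‖u‖⁻¹ • u : EuclideanSpace ℝ (Fin N))) i = ‖u‖⁻¹ • u from rfl, norm_smul, norm_inv, norm_norm,
        inv_mul_cancel₀ (norm_ne_zero_iff.2 hu)]
    · intro i j hij
      exact absurd (Subsingleton.elim i j) hij
  obtain ⟨b, hb⟩ := hon.exists_orthonormalBasis_extension_of_card_eq hcard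
  have hb0 : b 0 = ‖u‖⁻¹ • u := hb 0 rfl
  set T := b.measurableEquiv with hT
  have hWmeas : Measurable fun x : EuclideanSpace ℝ (Fin N) => ENNReal.ofReal (myW N σ x) :=
    ENNReal.measurable_ofReal.comp myW_cont.measurable
  have hγmap : (gaussPi (Fin N) σ).map T = gaussPi (Fin N) σ := by
    rw [gaussPi_eq hσ, myMapWithDensity T _ _ hWmeas,
      (b.measurePreserving_measurableEquiv).map_eq]
    congr 1
    funext y
    have hnorm : ‖(T.symm y : EuclideanSpace ℝ (Fin N))‖ = ‖y‖ := b.repr.symm.norm_map y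
    show ENNReal.ofReal (myW N σ (T.symm y)) = ENNReal.ofReal (myW N σ y)
    unfold myW
    rw [hnorm]
  have hS : {x : EuclideanSpace ℝ (Fin N) | ⟪u, x⟫ ≤ c}
      = T ⁻¹' {y : EuclideanSpace ℝ (Fin N) | y 0 ≤ c / ‖u‖} := by
    ext x
    simp only [Set.mem_setOf_eq, Set.mem_preimage]
    have h1 : (T x : EuclideanSpace ℝ (Fin N)) 0 = ⟪b 0, x⟫ := b.repr_apply_apply x 0
    rw [h1, hb0, real_inner_smul_left, div_eq_inv_mul]
    exact (mul_le_mul_iff_right₀ (inv_pos.2 hpos)).symm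
  have hmeas0 : Measurable fun y : EuclideanSpace ℝ (Fin N) => y 0 := by fun_prop
  have hmeasB : MeasurableSet {y : EuclideanSpace ℝ (Fin N) | y 0 ≤ c / ‖u‖} :=
    measurableSet_le hmeas0 measurable_const
  rw [hS, ← Measure.map_apply T.measurable hmeasB, hγmap]
  rw [gaussPi, Measure.map_apply (MeasurableEquiv.measurable _) hmeasB]
  have hpre : (MeasurableEquiv.toLp 2 (Fin N → ℝ)) ⁻¹'
      {y : EuclideanSpace ℝ (Fin N) | y 0 ≤ c / ‖u‖}
      = Set.univ.pi (fun i : Fin N => if i = 0 then Set.Iic (c / ‖u‖) else Set.univ) := by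
    ext x
    simp only [Set.mem_preimage, Set.mem_setOf_eq, Set.mem_univ_pi]
    constructor
    · intro h i
      by_cases hi : i = 0
      · subst hi; simpa using h
      · simp [hi]
    · intro h
      have h0 := h 0
      simpa using h0
  haveI : ∀ i : Fin N, IsProbabilityMeasure (gaussianReal 0 (⟨σ^2, sq_nonneg σ⟩ : ℝ≥0)) :=
    fun _ => instIsProbabilityMeasureGaussianReal _ _
  rw [hpre, Measure.pi_pi]
  rw [Fintype.prod_eq_single (0 : Fin N) (fun i hi => by simp [hi]; exact (this i).measure_univ)]
  simp only [if_pos rfl, if_true]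
  have hvar : (gaussianReal 0 1).map (fun t => σ * t)
      = gaussianReal 0 (⟨σ^2, sq_nonneg σ⟩ : ℝ≥0) := by
    rw [gaussianReal_map_const_mul σ, mul_zero, mul_one]
    rfl
  rw [← hvar, Measure.map_apply (measurable_const_mul σ) measurableSet_Iic]
  congr 1
  ext t
  simp only [Set.mem_preimage, Set.mem_Iic]
  rw [le_div_iff₀ hpos, le_div_iff₀ (mul_pos hσ hpos)]
  constructor <;> intro h <;> nlinarith

lemma smoothed_lower (hN : 1 ≤ N) (hσ : 0 < σ) (f : EuclideanSpace ℝ (Fin N) → ℝ)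
    (hfm : Measurable f) (h0 : ∀ x, 0 ≤ f x) (h1 : ∀ x, f x ≤ 1)
    (δ : EuclideanSpace ℝ (Fin N))
    (hp0 : 0 < ∫ x, f x ∂(gaussPi (Fin N) σ))
    (hp1 : ∫ x, f x ∂(gaussPi (Fin N) σ) < 1) :
    stdGaussianCDF (probit (∫ x, f x ∂(gaussPi (Fin N) σ)) - ‖δ‖/σ)
      ≤ ∫ x, f (δ + x) ∂(gaussPi (Fin N) σ) := by
  haveI : IsProbabilityMeasure (gaussPi (Fin N) σ) := gaussPi_isProb
  set γ := gaussPi (Fin N) σ with hγ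
  set F : EuclideanSpace ℝ (Fin N) → ℝ≥0∞ := fun x => ENNReal.ofReal (f x) with hF
  have hFm : Measurable F := ENNReal.measurable_ofReal.comp hfm
  have hFle1 : ∀ x, F x ≤ 1 := fun x => ENNReal.ofReal_le_one.2 (h1 x)
  have hlt : ∫⁻ x, F x ∂γ ≤ 1 := by
    calc ∫⁻ x, F x ∂γ ≤ ∫⁻ _, 1 ∂γ := lintegral_mono hFle1
      _ = 1 := by rw [lintegral_one, measure_univ]
  have hne : ∫⁻ x, F x ∂γ ≠ ⊤ := (lt_of_le_of_lt hlt ENNReal.one_lt_top).ne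
  have hp : ∫ x, f x ∂γ = (∫⁻ x, F x ∂γ).toReal :=
    integral_eq_lintegral_of_nonneg_ae (ae_of_all _ h0) hfm.aestronglyMeasurable
  have hpeq : ∫⁻ x, F x ∂γ = ENNReal.ofReal (∫ x, f x ∂γ) := by
    rw [hp, ENNReal.ofReal_toReal hne]
  have hpδ : ∫ x, f (δ + x) ∂γ = (∫⁻ x, F (δ + x) ∂γ).toReal :=
    integral_eq_lintegral_of_nonneg_ae (ae_of_all _ fun x => h0 _)
      ((hfm.comp (measurable_const_add δ)).aestronglyMeasurable)
  by_cases hδ : δ = 0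
  · subst hδ
    simp only [norm_zero, zero_div, sub_zero]
    rw [Phi_probit hp0 hp1]
    simp only [zero_add]
    exact le_refl _
  · have hupos : 0 < ‖δ‖ := norm_pos_iff.2 hδ
    set p := ∫ x, f x ∂γ with hpdef
    set c := σ * ‖δ‖ * probit p with hc
    set S := {x : EuclideanSpace ℝ (Fin N) | ⟪δ, x⟫ ≤ c} with hSdef
    have hinner : Continuous fun x : EuclideanSpace ℝ (Fin N) => ⟪δ, x⟫ :=
      Continuous.inner continuous_const continuous_id
    have hSmeas : MeasurableSet S := measurableSet_le hinner.measurable measurable_const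
    have hLcont : Continuous (myL N σ δ) := by
      unfold myL
      exact Real.continuous_exp.comp
        (((continuous_const.mul hinner).sub continuous_const).div_const _)
    have hLm : Measurable fun x => ENNReal.ofReal (myL N σ δ x) :=
      ENNReal.measurable_ofReal.comp hLcont.measurable
    have hγS : γ S = ENNReal.ofReal p := by
      rw [hγ, hSdef, gauss_halfspace hN hσ δ hδ c]
      have hcc : c / (σ * ‖δ‖) = probit p := by
        rw [hc, mul_comm σ ‖δ‖]
        field_simp
      rw [hcc]
      show gaussianReal 0 1 (Set.Iic (probit p)) = ENNReal.ofReal p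
      have hP := Phi_probit hp0 hp1
      conv_rhs => rw [← hP]
      unfold stdGaussianCDF
      rw [ENNReal.ofReal_toReal (measure_ne_top _ _)]
    set k := ENNReal.ofReal (Real.exp ((2*c - ‖δ‖^2)/(2*σ^2))) with hk
    have hSL : ∀ x ∈ S, ENNReal.ofReal (myL N σ δ x) ≤ k := by
      intro x hx
      refine ENNReal.ofReal_le_ofReal (Real.exp_le_exp.2 ?_)
      have hxc : ⟪δ, x⟫ ≤ c := hx
      gcongr
    have hSL' : ∀ x ∉ S, k ≤ ENNReal.ofReal (myL N σ δ x) := by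
      intro x hx
      refine ENNReal.ofReal_le_ofReal (Real.exp_le_exp.2 ?_)
      have hxc : c < ⟪δ, x⟫ := lt_of_not_ge hx
      have hxc' : c ≤ ⟪δ, x⟫ := hxc.le
      gcongr
    have hnp := myNP γ F (fun x => ENNReal.ofReal (myL N σ δ x)) hFm hLm hFle1 S hSmeas
      k ENNReal.ofReal_ne_top hSL hSL' (hpeq.trans hγS.symm)
    have hCM1 : ∫⁻ x, F (δ + x) ∂γ
        = ∫⁻ x, F x * ENNReal.ofReal (myL N σ δ x) ∂γ := lintegral_shift hσ F δ
    have hCM2 : ∫⁻ x, (S.indicator (fun _ => (1:ℝ≥0∞))) (δ + x) ∂γ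
        = ∫⁻ x in S, ENNReal.ofReal (myL N σ δ x) ∂γ := by
      rw [lintegral_shift hσ _ δ, ← lintegral_indicator hSmeas]
      refine lintegral_congr fun x => ?_
      by_cases hx : x ∈ S <;> simp [hx]
    have hleft : ∫⁻ x, (S.indicator (fun _ => (1:ℝ≥0∞))) (δ + x) ∂γ
        = γ ((fun x => δ + x) ⁻¹' S) := by
      have hptw : ∀ x, (S.indicator (fun _ => (1:ℝ≥0∞))) (δ + x)
          = ((fun x => δ + x) ⁻¹' S).indicator (fun _ => (1:ℝ≥0∞)) x := by
        intro x
        by_cases hx : δ + x ∈ S <;>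
          simp [Set.indicator, Set.mem_preimage, hx]
      rw [lintegral_congr hptw,
        lintegral_indicator_const (hSmeas.preimage (measurable_const_add δ)), one_mul]
    have hpre : (fun x => δ + x) ⁻¹' S
        = {x : EuclideanSpace ℝ (Fin N) | ⟪δ, x⟫ ≤ c - ‖δ‖^2} := by
      ext x
      simp only [Set.mem_preimage, hSdef, Set.mem_setOf_eq]
      rw [inner_add_right, real_inner_self_eq_norm_sq]
      constructor <;> intro <;> linarith
    have hγpre : γ {x : EuclideanSpace ℝ (Fin N) | ⟪δ, x⟫ ≤ c - ‖δ‖^2}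
        = ENNReal.ofReal (stdGaussianCDF (probit p - ‖δ‖/σ)) := by
      rw [hγ, gauss_halfspace hN hσ δ hδ _]
      have harg : (c - ‖δ‖^2) / (σ * ‖δ‖) = probit p - ‖δ‖/σ := by
        rw [hc]
        field_simp
      rw [harg]
      unfold stdGaussianCDF
      rw [ENNReal.ofReal_toReal (measure_ne_top _ _)]
    have hchain : ENNReal.ofReal (stdGaussianCDF (probit p - ‖δ‖/σ))
        ≤ ∫⁻ x, F (δ + x) ∂γ := by
      calc ENNReal.ofReal (stdGaussianCDF (probit p - ‖δ‖/σ))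
          = γ ((fun x => δ + x) ⁻¹' S) := by rw [hpre, hγpre]
        _ = ∫⁻ x, (S.indicator (fun _ => (1:ℝ≥0∞))) (δ + x) ∂γ := hleft.symm
        _ = ∫⁻ x in S, ENNReal.ofReal (myL N σ δ x) ∂γ := hCM2
        _ ≤ ∫⁻ x, F x * ENNReal.ofReal (myL N σ δ x) ∂γ := hnp
        _ = ∫⁻ x, F (δ + x) ∂γ := hCM1.symm
    have hneδ : ∫⁻ x, F (δ + x) ∂γ ≠ ⊤ := by
      refine (lt_of_le_of_lt ?_ ENNReal.one_lt_top).ne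
      calc ∫⁻ x, F (δ + x) ∂γ ≤ ∫⁻ _, 1 ∂γ := lintegral_mono fun x => hFle1 _
        _ = 1 := by rw [lintegral_one, measure_univ]
    calc stdGaussianCDF (probit p - ‖δ‖/σ)
        = (ENNReal.ofReal (stdGaussianCDF (probit p - ‖δ‖/σ))).toReal :=
          (ENNReal.toReal_ofReal ENNReal.toReal_nonneg).symm
      _ ≤ (∫⁻ x, F (δ + x) ∂γ).toReal := ENNReal.toReal_mono hneδ hchain
      _ = ∫ x, f (δ + x) ∂γ := hpδ.symm

lemma smoothed_upper (hN : 1 ≤ N) (hσ : 0 < σ) (f : EuclideanSpace ℝ (Fin N) → ℝ)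
    (hfm : Measurable f) (h0 : ∀ x, 0 ≤ f x) (h1 : ∀ x, f x ≤ 1)
    (δ : EuclideanSpace ℝ (Fin N))
    (hp0 : 0 < ∫ x, f x ∂(gaussPi (Fin N) σ))
    (hp1 : ∫ x, f x ∂(gaussPi (Fin N) σ) < 1) :
    ∫ x, f (δ + x) ∂(gaussPi (Fin N) σ)
      ≤ stdGaussianCDF (probit (∫ x, f x ∂(gaussPi (Fin N) σ)) + ‖δ‖/σ) := by
  haveI : IsProbabilityMeasure (gaussPi (Fin N) σ) := gaussPi_isProb
  have hint : Integrable f (gaussPi (Fin N) σ) := by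
    refine Integrable.mono' (integrable_const (1:ℝ)) hfm.aestronglyMeasurable
      (ae_of_all _ fun x => ?_)
    rw [Real.norm_eq_abs, abs_of_nonneg (h0 x)]
    exact h1 x
  have hintδ : Integrable (fun x => f (δ + x)) (gaussPi (Fin N) σ) := by
    refine Integrable.mono' (integrable_const (1:ℝ))
      ((hfm.comp (measurable_const_add δ)).aestronglyMeasurable)
      (ae_of_all _ fun x => ?_)
    rw [Real.norm_eq_abs, abs_of_nonneg (h0 _)]
    exact h1 _
  have hq : ∫ x, (1 - f x) ∂(gaussPi (Fin N) σ) = 1 - ∫ x, f x ∂(gaussPi (Fin N) σ) := by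
    rw [integral_sub (integrable_const 1) hint, integral_const, probReal_univ]
    simp
  have hqδ : ∫ x, (1 - f (δ + x)) ∂(gaussPi (Fin N) σ)
      = 1 - ∫ x, f (δ + x) ∂(gaussPi (Fin N) σ) := by
    rw [integral_sub (integrable_const 1) hintδ, integral_const, probReal_univ]
    simp
  have hlow := smoothed_lower hN hσ (fun x => 1 - f x) (measurable_const.sub hfm)
    (fun x => by show (0:ℝ) ≤ 1 - f x; linarith [h1 x])
    (fun x => by show 1 - f x ≤ 1; linarith [h0 x]) δ
    (by rw [hq]; linarith) (by rw [hq]; linarith)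
  have hlow' : stdGaussianCDF (probit (∫ x, (1 - f x) ∂(gaussPi (Fin N) σ)) - ‖δ‖/σ)
      ≤ ∫ x, (1 - f (δ + x)) ∂(gaussPi (Fin N) σ) := hlow
  rw [hq, hqδ, probit_one_sub hp0 hp1] at hlow'
  have harg : -probit (∫ x, f x ∂(gaussPi (Fin N) σ)) - ‖δ‖/σ
      = -(probit (∫ x, f x ∂(gaussPi (Fin N) σ)) + ‖δ‖/σ) := by ring
  rw [harg, Phi_neg] at hlow'
  linarith


/-- Certified radius for the per-state action: within the radius
`r = (σ/2)(Φ⁻¹((Q̃(s,a₁)−Vmin)/(Vmax−Vmin)) − Φ⁻¹((Q̃(s,a₂)−Vmin)/(Vmax−Vmin)))`,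
the smoothed value of the top action `a₁` stays strictly above that of every
other action, so the top action does not change. -/
theorem certified_radius_per_state_action
    (N : ℕ) (hN : 1 ≤ N) (σ : ℝ) (hσ : 0 < σ)
    (Vmin Vmax : ℝ) (hV : Vmin < Vmax)
    (A : Type*) [Fintype A] (hA : 2 ≤ Fintype.card A)
    (Q : EuclideanSpace ℝ (Fin N) → A → ℝ)
    (hQmeas : ∀ a, Measurable fun x => Q x a)
    (hbd : ∀ x a, Vmin ≤ Q x a ∧ Q x a ≤ Vmax)
    (Qt : EuclideanSpace ℝ (Fin N) → A → ℝ)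
    (hQt : ∀ s a, Qt s a = ∫ Δ, Q (s + Δ) a ∂(gaussPi (Fin N) σ))
    (s : EuclideanSpace ℝ (Fin N))
    (hrange : ∀ s' a, Vmin < Qt s' a ∧ Qt s' a < Vmax)
    (a₁ a₂ : A) (ha₂ne : a₂ ≠ a₁)
    (ha₁top : ∀ a, Qt s a ≤ Qt s a₁)
    (ha₂top : ∀ a, a ≠ a₁ → Qt s a ≤ Qt s a₂)
    (r : ℝ)
    (hr : r = σ / 2 * (probit ((Qt s a₁ - Vmin) / (Vmax - Vmin)) -
      probit ((Qt s a₂ - Vmin) / (Vmax - Vmin)))) :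
    ∀ δ : EuclideanSpace ℝ (Fin N), ‖δ‖ < r →
      ∀ a, a ≠ a₁ → Qt (s + δ) a < Qt (s + δ) a₁ := by
  intro δ hδnorm a ha
  haveI : IsProbabilityMeasure (gaussPi (Fin N) σ) := gaussPi_isProb
  have hC : 0 < Vmax - Vmin := sub_pos.2 hV
  have hQint : ∀ (s' : EuclideanSpace ℝ (Fin N)) (b : A),
      Integrable (fun x => Q (s' + x) b) (gaussPi (Fin N) σ) := by
    intro s' b
    refine Integrable.mono' (integrable_const (max |Vmin| |Vmax|))
      ((hQmeas b).comp (measurable_const_add s')).aestronglyMeasurable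
      (ae_of_all _ fun x => ?_)
    rw [Real.norm_eq_abs, abs_le]
    obtain ⟨hl, hr'⟩ := hbd (s' + x) b
    constructor
    · have h1 := neg_abs_le Vmin
      have h2 := le_max_left |Vmin| |Vmax|
      linarith
    · have h1 := le_abs_self Vmax
      have h2 := le_max_right |Vmin| |Vmax|
      linarith
  have hPlink : ∀ (s' : EuclideanSpace ℝ (Fin N)) (b : A),
      ∫ x, (Q (s' + x) b - Vmin) / (Vmax - Vmin) ∂(gaussPi (Fin N) σ)
        = (Qt s' b - Vmin) / (Vmax - Vmin) := by
    intro s' b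
    rw [integral_div, integral_sub (hQint s' b) (integrable_const _), integral_const,
      probReal_univ, ← hQt s' b]
    simp
  have hmemP : ∀ (s' : EuclideanSpace ℝ (Fin N)) (b : A),
      0 < (Qt s' b - Vmin)/(Vmax - Vmin) ∧ (Qt s' b - Vmin)/(Vmax - Vmin) < 1 := by
    intro s' b
    obtain ⟨hl, hr'⟩ := hrange s' b
    exact ⟨div_pos (by linarith) hC, (div_lt_one hC).2 (by linarith)⟩
  have hfmeas : ∀ b : A, Measurable fun x => (Q (s + x) b - Vmin)/(Vmax - Vmin) :=
    fun b => (((hQmeas b).comp (measurable_const_add s)).sub measurable_const).div_const _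
  have hf0 : ∀ (b : A) x, 0 ≤ (Q (s + x) b - Vmin)/(Vmax - Vmin) :=
    fun b x => div_nonneg (by linarith [(hbd (s + x) b).1]) hC.le
  have hf1 : ∀ (b : A) x, (Q (s + x) b - Vmin)/(Vmax - Vmin) ≤ 1 :=
    fun b x => (div_le_one hC).2 (by linarith [(hbd (s + x) b).2])
  have hshiftInt : ∀ b : A,
      ∫ x, (Q (s + (δ + x)) b - Vmin)/(Vmax - Vmin) ∂(gaussPi (Fin N) σ)
        = (Qt (s + δ) b - Vmin)/(Vmax - Vmin) := by
    intro b
    have h := hPlink (s + δ) b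
    simp only [← add_assoc]
    exact h
  -- lower bound for a₁
  have hlo : stdGaussianCDF (probit ((Qt s a₁ - Vmin)/(Vmax - Vmin)) - ‖δ‖/σ)
      ≤ (Qt (s + δ) a₁ - Vmin)/(Vmax - Vmin) := by
    have h := smoothed_lower hN hσ (fun x => (Q (s + x) a₁ - Vmin)/(Vmax - Vmin))
      (hfmeas a₁) (hf0 a₁) (hf1 a₁) δ
      (by rw [hPlink s a₁]; exact (hmemP s a₁).1)
      (by rw [hPlink s a₁]; exact (hmemP s a₁).2)
    have h' : stdGaussianCDF
        (probit (∫ x, (Q (s + x) a₁ - Vmin)/(Vmax - Vmin) ∂(gaussPi (Fin N) σ)) - ‖δ‖/σ)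
        ≤ ∫ x, (Q (s + (δ + x)) a₁ - Vmin)/(Vmax - Vmin) ∂(gaussPi (Fin N) σ) := h
    rwa [hPlink s a₁, hshiftInt a₁] at h'
  -- upper bound for a
  have hup : (Qt (s + δ) a - Vmin)/(Vmax - Vmin)
      ≤ stdGaussianCDF (probit ((Qt s a - Vmin)/(Vmax - Vmin)) + ‖δ‖/σ) := by
    have h := smoothed_upper hN hσ (fun x => (Q (s + x) a - Vmin)/(Vmax - Vmin))
      (hfmeas a) (hf0 a) (hf1 a) δ
      (by rw [hPlink s a]; exact (hmemP s a).1)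
      (by rw [hPlink s a]; exact (hmemP s a).2)
    have h' : ∫ x, (Q (s + (δ + x)) a - Vmin)/(Vmax - Vmin) ∂(gaussPi (Fin N) σ)
        ≤ stdGaussianCDF
          (probit (∫ x, (Q (s + x) a - Vmin)/(Vmax - Vmin) ∂(gaussPi (Fin N) σ)) + ‖δ‖/σ) := h
    rwa [hPlink s a, hshiftInt a] at h'
  -- monotonicity of probit between a and a₂
  have hmono : probit ((Qt s a - Vmin)/(Vmax - Vmin))
      ≤ probit ((Qt s a₂ - Vmin)/(Vmax - Vmin)) := by
    refine probit_mono (hmemP s a).1 (hmemP s a₂).2 ?_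
    have := ha₂top a ha
    gcongr
  set g1 := probit ((Qt s a₁ - Vmin)/(Vmax - Vmin)) with hg1
  set g2 := probit ((Qt s a₂ - Vmin)/(Vmax - Vmin)) with hg2
  have hrpos : 0 < r := lt_of_le_of_lt (norm_nonneg δ) hδnorm
  have hgap : 0 < g1 - g2 := by nlinarith [hr, hrpos]
  have hd : ‖δ‖/σ < (g1 - g2)/2 := by
    rw [div_lt_div_iff₀ hσ (by norm_num : (0:ℝ) < 2)]
    nlinarith
  have hkey : g2 + ‖δ‖/σ < g1 - ‖δ‖/σ := by linarith
  have hPP : (Qt (s + δ) a - Vmin)/(Vmax - Vmin) < (Qt (s + δ) a₁ - Vmin)/(Vmax - Vmin) :=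
    calc (Qt (s + δ) a - Vmin)/(Vmax - Vmin)
        ≤ stdGaussianCDF (probit ((Qt s a - Vmin)/(Vmax - Vmin)) + ‖δ‖/σ) := hup
      _ ≤ stdGaussianCDF (g2 + ‖δ‖/σ) := Phi_mono (by linarith)
      _ < stdGaussianCDF (g1 - ‖δ‖/σ) := Phi_strictMono hkey
      _ ≤ (Qt (s + δ) a₁ - Vmin)/(Vmax - Vmin) := hlo
  have h2 := mul_lt_mul_of_pos_right hPP hC
  rw [div_mul_cancel₀ _ hC.ne', div_mul_cancel₀ _ hC.ne'] at h2
  linarith
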